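/- In a lattice of finite height, the following are equivalent: (1) L is modular; (2) for all x, y in L, x∨y covers both x and y if and only if x and y both cover x∧y; (3) L is ranked and its height function satisfies h(x) + h(y) = h(x∧y) + h(x∨y) for all x, y. -/
import Mathlib

namespace ModularTfae

variable {α : Type*} [Lattice α] [BoundedOrder α]

private noncomputable def hN (x : α) : ℕ := (Order.height x).toNat

private lemma hN_cast (hf : ∀ x : α, Order.height x ≠ ⊤) (x : α) :
    Order.height x = (hN x : ℕ∞) := (ENat.coe_toNat (hf x)).symm

private lemma hN_mono (hf : ∀ x : α, Order.height x ≠ ⊤) {a b : α} (h : a ≤ b) :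
    hN a ≤ hN b := ENat.toNat_le_toNat (Order.height_mono h) (hf b)

private lemma hN_strict (hf : ∀ x : α, Order.height x ≠ ⊤) {a b : α} (h : a < b) :
    hN a < hN b := by
  have := Order.height_strictMono h (lt_top_iff_ne_top.2 (hf a))
  rw [hN_cast hf a, hN_cast hf b, Nat.cast_lt] at this
  exact this

private lemma covBy_of_height (hf : ∀ x : α, Order.height x ≠ ⊤) {a b : α}
    (hab : a < b) (h : hN b = hN a + 1) : a ⋖ b :=
  ⟨hab, fun c h1 h2 => by
    have := hN_strict hf h1; have := hN_strict hf h2; omega⟩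

private lemma exists_covBy_le_aux (hf : ∀ x : α, Order.height x ≠ ⊤) :
    ∀ n : ℕ, ∀ a b : α, hN b ≤ n → a < b → ∃ c, a ⋖ c ∧ c ≤ b := by
  intro n
  induction n with
  | zero => intro a b hb hab; have := hN_strict hf hab; omega
  | succ n ih =>
    intro a b hb hab
    by_cases h : a ⋖ b
    · exact ⟨b, h, le_rfl⟩
    · obtain ⟨d, hd1, hd2⟩ := (not_covBy_iff hab).1 h
      have : hN d ≤ n := by have := hN_strict hf hd2; omega
      obtain ⟨c, hc1, hc2⟩ := ih a d this hd1
      exact ⟨c, hc1, hc2.trans hd2.le⟩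

private lemma exists_covBy_le (hf : ∀ x : α, Order.height x ≠ ⊤) {a b : α} (hab : a < b) :
    ∃ c, a ⋖ c ∧ c ≤ b := exists_covBy_le_aux hf (hN b) a b le_rfl hab

private lemma exists_le_covBy_aux (hf : ∀ x : α, Order.height x ≠ ⊤) :
    ∀ n : ℕ, ∀ a b : α, hN b - hN a ≤ n → a < b → ∃ c, a ≤ c ∧ c ⋖ b := by
  intro n
  induction n with
  | zero => intro a b hb hab; have := hN_strict hf hab; omega
  | succ n ih =>
    intro a b hb hab
    by_cases h : a ⋖ b
    · exact ⟨a, le_rfl, h⟩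
    · obtain ⟨d, hd1, hd2⟩ := (not_covBy_iff hab).1 h
      have h1 := hN_strict hf hd1
      have h2 := hN_strict hf hd2
      obtain ⟨c, hc1, hc2⟩ := ih d b (by omega) hd2
      exact ⟨c, hd1.le.trans hc1, hc2⟩

private lemma exists_le_covBy (hf : ∀ x : α, Order.height x ≠ ⊤) {a b : α} (hab : a < b) :
    ∃ c, a ≤ c ∧ c ⋖ b := exists_le_covBy_aux hf (hN b - hN a) a b le_rfl hab

private lemma exists_covBy_height (hf : ∀ x : α, Order.height x ≠ ⊤) {b : α} {m : ℕ}
    (hb : hN b = m + 1) : ∃ a, a ⋖ b ∧ hN a = m := by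
  have hb' : Order.height b = ((m + 1 : ℕ) : ℕ∞) := by rw [hN_cast hf b, hb]
  obtain ⟨p, hlast, hlen⟩ := Order.exists_series_of_height_eq_coe b hb'
  have hm : m < p.length + 1 := by omega
  set a' : α := p ⟨m, hm⟩ with ha'
  have ha'b : a' < b := by
    rw [← hlast]
    apply p.strictMono
    show (⟨m, hm⟩ : Fin _) < Fin.last p.length
    simp [Fin.lt_iff_val_lt_val, Fin.last, hlen]
  have hha' : (m : ℕ∞) ≤ Order.height a' := by
    simpa using Order.index_le_height p ⟨m, hm⟩
  have hma' : m ≤ hN a' := by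
    rw [hN_cast hf a', Nat.cast_le] at hha'; exact hha'
  obtain ⟨c, hc1, hc2⟩ := exists_le_covBy hf ha'b
  have h1 : hN a' ≤ hN c := hN_mono hf hc1
  have h2 : hN c < hN b := hN_strict hf hc2.lt
  exact ⟨c, hc2, by omega⟩


private lemma ranked_aux (hf : ∀ x : α, Order.height x ≠ ⊤)
    (hC : ∀ x y : α, x ⋖ x ⊔ y → y ⋖ x ⊔ y → x ⊓ y ⋖ x ∧ x ⊓ y ⋖ y) :
    ∀ n : ℕ, ∀ a b : α, hN b ≤ n → a ⋖ b → hN b = hN a + 1 := by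
  intro n
  induction n with
  | zero => intro a b hb hab; have := hN_strict hf hab.lt; omega
  | succ n ih =>
    intro a b hb hab
    have hpos := hN_strict hf hab.lt
    obtain ⟨a'', ha''b, ha''⟩ := exists_covBy_height hf (b := b) (m := hN b - 1) (by omega)
    by_cases he : a = a''
    · subst he; omega
    · have hsup : a ⊔ a'' = b := by
        rcases (le_sup_left : a ≤ a ⊔ a'').lt_or_eq with h2 | h2
        · exact (sup_le hab.lt.le ha''b.lt.le).lt_or_eq.resolve_left (hab.2 h2)
        · exfalso
          have h5 : a'' ≤ a := sup_eq_left.1 h2.symm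
          rcases h5.lt_or_eq with h6 | h6
          · exact ha''b.2 h6 hab.lt
          · exact he h6.symm
      obtain ⟨hc1, hc2⟩ := hC a a'' (hsup ▸ hab) (hsup ▸ ha''b)
      have i1 : hN a'' = hN (a ⊓ a'') + 1 := ih _ _ (by omega) hc2
      have i2 : hN a = hN (a ⊓ a'') + 1 := ih _ _ (by omega) hc1
      omega

private lemma subm_aux (hf : ∀ x : α, Order.height x ≠ ⊤)
    (hC : ∀ x y : α, x ⊓ y ⋖ x → x ⊓ y ⋖ y → x ⋖ x ⊔ y ∧ y ⋖ x ⊔ y)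
    (hr : ∀ a b : α, a ⋖ b → hN b = hN a + 1) :
    ∀ n : ℕ, ∀ x y : α, (hN x - hN (x ⊓ y)) + (hN y - hN (x ⊓ y)) ≤ n →
      hN (x ⊔ y) + hN (x ⊓ y) ≤ hN x + hN y := by
  intro n
  induction n using Nat.strong_induction_on with
  | _ n ih =>
    intro x y hn
    by_cases hxy : x ≤ y
    · rw [inf_eq_left.2 hxy, sup_eq_right.2 hxy]; omega
    by_cases hyx : y ≤ x
    · rw [inf_eq_right.2 hyx, sup_eq_left.2 hyx]
    have hix : x ⊓ y < x := lt_of_le_of_ne inf_le_left fun h => hxy (inf_eq_left.1 h)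
    have hiy : x ⊓ y < y := lt_of_le_of_ne inf_le_right fun h => hyx (inf_eq_right.1 h)
    have kx := hN_strict hf hix
    have ky := hN_strict hf hiy
    by_cases hk : hN x = hN (x ⊓ y) + 1
    · -- k = 1
      have hcx : x ⊓ y ⋖ x := covBy_of_height hf hix hk
      obtain ⟨z, hz1, hz2⟩ := exists_covBy_le hf hiy
      have hxz : x ⊓ z = x ⊓ y :=
        le_antisymm (le_inf inf_le_left (inf_le_right.trans hz2))
          (le_inf inf_le_left hz1.lt.le)
      obtain ⟨hx', hz'⟩ := hC x z (hxz ▸ hcx) (hxz ▸ hz1)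
      have hmeet : (x ⊔ z) ⊓ y = z := by
        rcases (le_inf le_sup_right hz2 : z ≤ (x ⊔ z) ⊓ y).lt_or_eq with h2 | h2
        · exfalso
          have h3 : (x ⊔ z) ⊓ y = x ⊔ z := inf_le_left.lt_or_eq.resolve_left (hz'.2 h2)
          exact hxy (le_sup_left.trans (h3 ▸ inf_le_right))
        · exact h2.symm
      have hs1 := hr _ _ hz1
      have hs2 := hr _ _ hx'
      have hm : (hN (x ⊔ z) - hN ((x ⊔ z) ⊓ y)) + (hN y - hN ((x ⊔ z) ⊓ y)) < n := by
        rw [hmeet]; omega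
      have hrec := ih _ hm (x ⊔ z) y le_rfl
      have hsupz : (x ⊔ z) ⊔ y = x ⊔ y := by rw [sup_assoc, sup_eq_right.2 hz2]
      rw [hsupz, hmeet] at hrec
      omega
    · -- k ≥ 2
      obtain ⟨m, hm1, hm2⟩ := exists_le_covBy hf hix
      have hminf : m ⊓ y = x ⊓ y :=
        le_antisymm (inf_le_inf_right y hm2.lt.le) (le_inf hm1 inf_le_right)
      have hrm := hr _ _ hm2
      have hm0 := hN_mono hf hm1
      have hmm : (hN m - hN (m ⊓ y)) + (hN y - hN (m ⊓ y)) < n := by rw [hminf]; omega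
      have S1 := ih _ hmm m y le_rfl
      rw [hminf] at S1
      rcases (le_inf hm2.lt.le le_sup_left : m ≤ x ⊓ (m ⊔ y)).lt_or_eq with h2 | h2
      · have h3 : x ⊓ (m ⊔ y) = x := inf_le_left.lt_or_eq.resolve_left (hm2.2 h2)
        have h4 : x ≤ m ⊔ y := h3 ▸ inf_le_right
        have h5 : x ⊔ y = m ⊔ y :=
          le_antisymm (sup_le h4 le_sup_right)
            (sup_le (hm2.lt.le.trans le_sup_left) le_sup_right)
        have h6 : hN (x ⊔ y) = hN (m ⊔ y) := by rw [h5]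
        omega
      · have hxmy : x ⊓ (m ⊔ y) = m := h2.symm
        have hsxy : x ⊔ (m ⊔ y) = x ⊔ y := by rw [← sup_assoc, sup_eq_left.2 hm2.lt.le]
        have hmm2 : (hN x - hN (x ⊓ (m ⊔ y))) + (hN (m ⊔ y) - hN (x ⊓ (m ⊔ y))) < n := by
          rw [hxmy]; omega
        have S2 := ih _ hmm2 x (m ⊔ y) le_rfl
        rw [hxmy, hsxy] at S2
        omega

private lemma supm_aux (hf : ∀ x : α, Order.height x ≠ ⊤)
    (hC : ∀ x y : α, x ⋖ x ⊔ y → y ⋖ x ⊔ y → x ⊓ y ⋖ x ∧ x ⊓ y ⋖ y)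
    (hr : ∀ a b : α, a ⋖ b → hN b = hN a + 1) :
    ∀ n : ℕ, ∀ x y : α, (hN (x ⊔ y) - hN x) + (hN (x ⊔ y) - hN y) ≤ n →
      hN x + hN y ≤ hN (x ⊓ y) + hN (x ⊔ y) := by
  intro n
  induction n using Nat.strong_induction_on with
  | _ n ih =>
    intro x y hn
    by_cases hxy : x ≤ y
    · rw [inf_eq_left.2 hxy, sup_eq_right.2 hxy]
    by_cases hyx : y ≤ x
    · rw [inf_eq_right.2 hyx, sup_eq_left.2 hyx]; omega
    have hix : x < x ⊔ y := lt_of_le_of_ne le_sup_left fun h => hyx (sup_eq_left.1 h.symm)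
    have hiy : y < x ⊔ y := lt_of_le_of_ne le_sup_right fun h => hxy (sup_eq_right.1 h.symm)
    have kx := hN_strict hf hix
    have ky := hN_strict hf hiy
    by_cases hk : hN (x ⊔ y) = hN x + 1
    · -- k = 1
      have hcx : x ⋖ x ⊔ y := covBy_of_height hf hix hk
      obtain ⟨z, hz2, hz1⟩ := exists_le_covBy hf hiy
      have hxz : x ⊔ z = x ⊔ y := by
        rcases (sup_le le_sup_left hz1.lt.le : x ⊔ z ≤ x ⊔ y).lt_or_eq with h2 | h2
        · exfalso
          have h4 : x ≤ z := by
            rcases (le_sup_right : z ≤ x ⊔ z).lt_or_eq with h5 | h5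
            · exact absurd h2 (hz1.2 h5)
            · exact le_sup_left.trans h5.ge
          exact absurd (sup_le h4 hz2 : x ⊔ y ≤ z) hz1.lt.not_ge
        · exact h2
      obtain ⟨hx', hz'⟩ := hC x z (hxz ▸ hcx) (hxz ▸ hz1)
      have hjoin : (x ⊓ z) ⊔ y = z := by
        rcases (sup_le inf_le_right hz2 : (x ⊓ z) ⊔ y ≤ z).lt_or_eq with h2 | h2
        · exfalso
          have h3 : (x ⊓ z) ⊔ y = x ⊓ z :=
            (le_sup_left.lt_or_eq.resolve_left fun h => hz'.2 h h2).symm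
          exact hyx ((h3 ▸ le_sup_right : y ≤ x ⊓ z).trans inf_le_left)
        · exact h2
      have hs1 := hr _ _ hz1
      have hs2 := hr _ _ hx'
      have hm : (hN ((x ⊓ z) ⊔ y) - hN (x ⊓ z)) + (hN ((x ⊓ z) ⊔ y) - hN y) < n := by
        rw [hjoin]; omega
      have hrec := ih _ hm (x ⊓ z) y le_rfl
      have hinfz : (x ⊓ z) ⊓ y = x ⊓ y := by rw [inf_assoc, inf_eq_right.2 hz2]
      rw [hjoin, hinfz] at hrec
      omega
    · -- k ≥ 2
      obtain ⟨m, hm2, hm1⟩ := exists_covBy_le hf hix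
      have hmsup : m ⊔ y = x ⊔ y :=
        le_antisymm (sup_le hm1 le_sup_right)
          (sup_le (hm2.lt.le.trans le_sup_left) le_sup_right)
      have hrm := hr _ _ hm2
      have hm0 := hN_mono hf hm1
      have hmm : (hN (m ⊔ y) - hN m) + (hN (m ⊔ y) - hN y) < n := by rw [hmsup]; omega
      have S1 := ih _ hmm m y le_rfl
      rw [hmsup] at S1
      have hxm : x ⊔ (m ⊓ y) ≤ m := sup_le hm2.lt.le inf_le_left
      rcases (le_sup_left : x ≤ x ⊔ (m ⊓ y)).lt_or_eq with h2 | h2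
      · have h3 : x ⊔ (m ⊓ y) = m := hxm.lt_or_eq.resolve_left (hm2.2 h2)
        have hinfm : x ⊓ (m ⊓ y) = x ⊓ y := by
          rw [← inf_assoc, inf_eq_left.2 hm2.lt.le]
        have hmy0 := hN_mono hf (inf_le_left : m ⊓ y ≤ m)
        have hmm2 : (hN (x ⊔ (m ⊓ y)) - hN x) + (hN (x ⊔ (m ⊓ y)) - hN (m ⊓ y)) < n := by
          rw [h3]; omega
        have S2 := ih _ hmm2 x (m ⊓ y) le_rfl
        rw [hinfm, h3] at S2
        omega
      · have h4 : m ⊓ y ≤ x := h2 ▸ le_sup_right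
        have h5 : m ⊓ y ≤ x ⊓ y := le_inf h4 inf_le_right
        have h6 := hN_mono hf h5
        omega

end ModularTfae

open ModularTfae in
/-- For a lattice of finite height the following are equivalent:
(1) the lattice is modular;
(2) `x ∨ y` covers both `x` and `y` iff both `x` and `y` cover `x ∧ y`;
(3) the lattice is ranked and `h x + h y = h (x ⊓ y) + h (x ⊔ y)`. -/
theorem modular_tfae {α : Type*} [Lattice α] [BoundedOrder α]
    (hfin : Order.height (⊤ : α) ≠ ⊤) :
    [ IsModularLattice α,
      ∀ x y : α, (x ⋖ x ⊔ y ∧ y ⋖ x ⊔ y) ↔ (x ⊓ y ⋖ x ∧ x ⊓ y ⋖ y),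
      (∀ x y : α, x ⋖ y → Order.height y = Order.height x + 1) ∧
        (∀ x y : α, Order.height x + Order.height y =
          Order.height (x ⊓ y) + Order.height (x ⊔ y)) ].TFAE := by
  have hf : ∀ x : α, Order.height x ≠ ⊤ := fun x =>
    (lt_of_le_of_lt (Order.height_mono le_top) (lt_top_iff_ne_top.2 hfin)).ne
  tfae_have 1 → 2 := by
    intro h x y
    haveI := h
    constructor
    · rintro ⟨h1, h2⟩
      exact ⟨inf_covBy_of_covBy_sup_right h2, inf_covBy_of_covBy_sup_left h1⟩
    · rintro ⟨h1, h2⟩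
      exact ⟨covBy_sup_of_inf_covBy_right h2, covBy_sup_of_inf_covBy_left h1⟩
  tfae_have 2 → 3 := by
    intro h2
    have hr : ∀ a b : α, a ⋖ b → hN b = hN a + 1 := fun a b hab =>
      ranked_aux hf (fun x y hx hy => (h2 x y).1 ⟨hx, hy⟩) (hN b) a b le_rfl hab
    constructor
    · intro a b hab
      rw [hN_cast hf a, hN_cast hf b, hr a b hab]
      push_cast
      rfl
    · intro x y
      have h3 := subm_aux hf (fun a b ha hb => (h2 a b).2 ⟨ha, hb⟩) hr _ x y le_rfl
      have h4 := supm_aux hf (fun a b ha hb => (h2 a b).1 ⟨ha, hb⟩) hr _ x y le_rfl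
      rw [hN_cast hf x, hN_cast hf y, hN_cast hf (x ⊓ y), hN_cast hf (x ⊔ y)]
      exact_mod_cast (by omega : hN x + hN y = hN (x ⊓ y) + hN (x ⊔ y))
  tfae_have 3 → 1 := by
    rintro ⟨hrk, heq⟩
    constructor
    intro x y z hxz
    set a := x ⊔ y ⊓ z with ha
    set b := (x ⊔ y) ⊓ z with hb
    have hab : a ≤ b :=
      sup_le (le_inf le_sup_left hxz) (le_inf (inf_le_left.trans le_sup_right) inf_le_right)
    have hinf : a ⊓ y = b ⊓ y := by
      apply le_antisymm (inf_le_inf_right y hab)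
      have h5 : b ⊓ y ≤ y ⊓ z := le_inf inf_le_right (inf_le_left.trans inf_le_right)
      exact le_inf (h5.trans le_sup_right) inf_le_right
    have hsup : a ⊔ y = b ⊔ y :=
      le_antisymm (sup_le_sup_right hab y)
        (sup_le (inf_le_left.trans (sup_le (le_sup_left.trans le_sup_left) le_sup_right))
          le_sup_right)
    have h1 := heq a y
    have h2 := heq b y
    rw [hinf, hsup, ← h2] at h1
    have h3 : Order.height a = Order.height b := WithTop.add_right_cancel (hf y) h1
    rcases hab.lt_or_eq with h4 | h4
    · exact absurd h3 (Order.height_strictMono h4 (lt_top_iff_ne_top.2 (hf a))).ne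
    · exact h4.ge
  tfae_finish
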